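/- (Tangential approach of the admissible-set barrier of the perfect SEIR model.) Let η > 0, β_min > 0, γ_max > 0 and I_max > 0. Suppose S, E, I : ℝ → ℝ are differentiable on a neighbourhood of t̄ and satisfy S' = −β_min S I, E' = β_min S I − η E, I' = η E − γ_max I there, with I(t̄) = I_max, E(t̄) = (γ_max / η) I_max, and S(t̄) = z₁ where 0 ≤ z₁ and β_min z₁ < γ_max. Then there exists ε > 0 such that I(t) < I_max for all t ∈ (t̄ − ε, t̄); i.e. the barrier curve ending tangentially at such a point of the ultimate tangentiality set lies in the open region {I < I_max} immediately before the tangency time. -/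

import Mathlib

/-- Tangential approach of the admissible-set barrier of the perfect SEIR model:
a barrier curve ending tangentially at a point of the ultimate tangentiality set
with `E(t̄) = (γ_max/η) I_max`, `I(t̄) = I_max`, `S(t̄) = z₁`, `0 ≤ z₁`,
`β_min z₁ < γ_max` (inputs `β ≡ β_min`, `γ ≡ γ_max`) satisfies `I(t) < I_max`
immediately before the tangency time. -/
theorem seir_admissible_barrier_tangential_approach
    (η βmin γmax Imax tbar z₁ : ℝ)
    (hη : 0 < η) (hβmin : 0 < βmin) (hγmax : 0 < γmax) (hImax : 0 < Imax)
    (S E I : ℝ → ℝ)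
    (hS : ∀ᶠ t in nhds tbar, HasDerivAt S (-(βmin * S t * I t)) t)
    (hE : ∀ᶠ t in nhds tbar, HasDerivAt E (βmin * S t * I t - η * E t) t)
    (hI : ∀ᶠ t in nhds tbar, HasDerivAt I (η * E t - γmax * I t) t)
    (hItan : I tbar = Imax) (hEtan : E tbar = (γmax / η) * Imax)
    (hStan : S tbar = z₁) (hz₁0 : 0 ≤ z₁) (hz₁ : βmin * z₁ < γmax) :
    ∃ ε > 0, ∀ t ∈ Set.Ioo (tbar - ε) tbar, I t < Imax := by
  obtain ⟨δ, hδ, hIδ⟩ := Metric.eventually_nhds_iff.mp hI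
  set g : ℝ → ℝ := fun t => η * E t - γmax * I t with hgdef
  have hη' : η ≠ 0 := ne_of_gt hη
  have hg0 : g tbar = 0 := by
    simp only [hgdef, hEtan, hItan]
    field_simp
    ring
  have hgd : HasDerivAt g
      (η * (βmin * S tbar * I tbar - η * E tbar) - γmax * (η * E tbar - γmax * I tbar)) tbar :=
    ((hE.self_of_nhds).const_mul η).sub ((hI.self_of_nhds).const_mul γmax)
  have hc : η * (βmin * S tbar * I tbar - η * E tbar) - γmax * (η * E tbar - γmax * I tbar) < 0 := by
    rw [hItan, hEtan, hStan]
    have h1 : η * ((γmax / η) * Imax) = γmax * Imax := by field_simp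
    rw [h1]
    nlinarith [mul_pos hη hImax]
  -- slope argument: g > 0 on a left punctured neighborhood
  have hslope := hasDerivAt_iff_tendsto_slope.mp hgd
  have hsl : ∀ᶠ t in nhdsWithin tbar (Set.Iio tbar), slope g tbar t < 0 := by
    have h2 : ∀ᶠ t in nhdsWithin tbar {tbar}ᶜ, slope g tbar t < 0 :=
      hslope.eventually_lt_const hc
    exact nhdsWithin_mono tbar (fun x hx => ne_of_lt hx) h2
  have hgpos : ∀ᶠ t in nhdsWithin tbar (Set.Iio tbar), 0 < g t := by
    filter_upwards [hsl, self_mem_nhdsWithin] with t hst (htl : t < tbar)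
    have hne : t - tbar < 0 := by linarith
    have h3 : (t - tbar)⁻¹ * g t < 0 := by
      simpa [slope, vsub_eq_sub, hg0] using hst
    have hinv : (t - tbar)⁻¹ < 0 := inv_lt_zero.mpr hne
    by_contra h
    push_neg at h
    nlinarith [mul_nonneg (neg_nonneg.mpr (le_of_lt hinv)) (neg_nonneg.mpr h)]
  obtain ⟨l, hl, hsub⟩ := mem_nhdsLT_iff_exists_Ioo_subset.mp hgpos
  set ε := min (tbar - l) δ / 2 with hε
  have hεpos : 0 < ε := by
    have : 0 < tbar - l := by simpa using hl
    positivity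
  have hεδ : ε < δ := by
    have : min (tbar - l) δ ≤ δ := min_le_right _ _
    have := hδ
    simp only [hε]
    linarith
  have hεl : l ≤ tbar - ε := by
    have h5 : min (tbar - l) δ ≤ tbar - l := min_le_left _ _
    have : ε ≤ (tbar - l) / 2 := by
      simp only [hε]; linarith
    have : 0 < tbar - l := by simpa using hl
    simp only [hε] at *
    linarith
  have hball : Set.Icc (tbar - ε) tbar ⊆ Metric.ball tbar δ := by
    intro x hx
    simp only [Metric.mem_ball, Real.dist_eq]
    rw [abs_lt]
    constructor <;> [linarith [hx.1]; linarith [hx.2]]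
  have hmono : StrictMonoOn I (Set.Icc (tbar - ε) tbar) := by
    apply strictMonoOn_of_deriv_pos (convex_Icc _ _)
    · intro x hx
      exact (hIδ (by have := hball hx; simpa [Real.dist_eq] using this)).continuousAt.continuousWithinAt
    · intro x hx
      rw [interior_Icc] at hx
      have hxball : dist x tbar < δ := hball ⟨le_of_lt hx.1, le_of_lt hx.2⟩
      rw [(hIδ hxball).deriv]
      exact hsub ⟨by linarith [hx.1], hx.2⟩
  refine ⟨ε, hεpos, fun t ht => ?_⟩
  have := hmono (Set.mem_Icc.mpr ⟨le_of_lt ht.1, le_of_lt ht.2⟩)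
    (Set.mem_Icc.mpr ⟨by linarith [hεpos], le_refl _⟩) ht.2
  rwa [hItan] at this
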